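/- Any two simple directed graphs with the same underlying undirected graph and the same number of directed edges are connected by a finite sequence of single edge flips and double edge moves. Equivalently: fix an undirected graph U and a number m of directed edges; then the set of orientations-with-possible-double-edges of U having exactly m directed edges is connected under SEF and DEM. -/

import Mathlib

variable {V : Type*} [DecidableEq V]

/-- A simple move on the edge set of a directed graph: either a single edge flip (SEF), which
replaces a single edge `(i,j)` (one whose reverse is absent) by `(j,i)`, or a double edge move
(DEM), which deletes one direction `(k,l)` of a double edge and adds the reverse `(j,i)` of a
single edge `(i,j)`. -/
def SimpleMove (E E' : Finset (V × V)) : Prop :=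
  (∃ i j : V, (i, j) ∈ E ∧ (j, i) ∉ E ∧ E' = insert (j, i) (E.erase (i, j))) ∨
  (∃ i j k l : V, (i, j) ∈ E ∧ (j, i) ∉ E ∧ (k, l) ∈ E ∧ (l, k) ∈ E ∧
      s(i, j) ≠ s(k, l) ∧ E' = insert (j, i) (E.erase (k, l)))

namespace SimpleMoveAux

open Finset Relation

variable {X Y A : Finset (V × V)} {a b i j k l : V}

def pr (X : Finset (V × V)) : Finset (Sym2 V) := X.image (fun p => s(p.1, p.2))

lemma mem_pr {e : Sym2 V} : e ∈ pr X ↔ ∃ p ∈ X, s(p.1, p.2) = e := mem_image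

omit [DecidableEq V] in
lemma pair_eq {q : V × V} : s(q.1, q.2) = s(a, b) ↔ q = (a, b) ∨ q = (b, a) := by
  obtain ⟨x, y⟩ := q
  simp [Sym2.eq_iff, Prod.ext_iff]

omit [DecidableEq V] in
lemma ne_pair_of_ne_sym {q : V × V} (h : s(q.1, q.2) ≠ s(a, b)) : q ≠ (a, b) ∧ q ≠ (b, a) :=
  ⟨fun hc => h (pair_eq.2 (Or.inl hc)), fun hc => h (pair_eq.2 (Or.inr hc))⟩

lemma pr_insert (q : V × V) : pr (insert q X) = insert s(q.1, q.2) (pr X) :=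
  image_insert _ _ _

lemma pr_filter_ne (e : Sym2 V) :
    pr (X.filter fun q => s(q.1, q.2) ≠ e) = (pr X).erase e := by
  ext f
  simp only [pr, mem_image, mem_filter, mem_erase]
  constructor
  · rintro ⟨p, ⟨hp, hpe⟩, rfl⟩
    exact ⟨hpe, p, hp, rfl⟩
  · rintro ⟨hf, p, hp, rfl⟩
    exact ⟨p, ⟨hp, hf⟩, rfl⟩

lemma pr_erase_swap (h : (l, k) ∈ X) (hkl : k ≠ l) : pr (X.erase (k, l)) = pr X := by
  apply Finset.Subset.antisymm (image_subset_image (erase_subset _ _))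
  intro f hf
  simp only [pr, mem_image] at hf ⊢
  obtain ⟨p, hp, rfl⟩ := hf
  by_cases hpk : p = (k, l)
  · subst hpk
    refine ⟨(l, k), mem_erase.2 ⟨?_, h⟩, Sym2.eq_swap⟩
    simp [Prod.ext_iff]
    intro h1 h2
    exact hkl h2
  · exact ⟨p, mem_erase.2 ⟨hpk, hp⟩, rfl⟩

lemma noloop_move (h : SimpleMove X Y) (hX : ∀ p ∈ X, p.1 ≠ p.2) : ∀ p ∈ Y, p.1 ≠ p.2 := by
  rcases h with ⟨i, j, hij, _, rfl⟩ | ⟨i, j, k, l, hij, _, _, _, _, rfl⟩ <;>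
  · intro p hp
    rcases mem_insert.1 hp with rfl | hp
    · exact (hX _ hij).symm
    · exact hX p (erase_subset _ _ hp)

lemma pr_move (h : SimpleMove X Y) (hX : ∀ p ∈ X, p.1 ≠ p.2) : pr Y = pr X := by
  rcases h with ⟨i, j, hij, hji, rfl⟩ | ⟨i, j, k, l, hij, hji, hkl, hlk, hs, rfl⟩
  · show pr (insert (j, i) (X.erase (i, j))) = pr X
    simp only [pr]
    rw [image_insert, show s(j, i) = s(i, j) from Sym2.eq_swap]
    conv_rhs => rw [← insert_erase hij, image_insert]
  · show pr (insert (j, i) (X.erase (k, l))) = pr X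
    have h1 : pr (X.erase (k, l)) = pr X := pr_erase_swap hlk (hX _ hkl)
    simp only [pr] at h1 ⊢
    rw [image_insert, show s(j, i) = s(i, j) from Sym2.eq_swap, h1]
    exact insert_eq_self.2 (mem_image.2 ⟨(i, j), hij, rfl⟩)

lemma lift_step (h : SimpleMove X Y) (hA : ∀ q ∈ A, s(q.1, q.2) ∉ pr X) :
    SimpleMove (X ∪ A) (Y ∪ A) := by
  have key : ∀ p : V × V, p ∈ X → (p.2, p.1) ∉ A := fun p hp hc =>
    hA _ hc (mem_pr.2 ⟨p, hp, Sym2.eq_swap⟩)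
  have key2 : ∀ p : V × V, p ∈ X → p ∉ A := fun p hp hc =>
    hA _ hc (mem_pr.2 ⟨p, hp, rfl⟩)
  rcases h with ⟨i, j, hij, hji, rfl⟩ | ⟨i, j, k, l, hij, hji, hkl, hlk, hs, rfl⟩
  · left
    refine ⟨i, j, mem_union_left _ hij, ?_, ?_⟩
    · intro hc
      rcases mem_union.1 hc with hc | hc
      · exact hji hc
      · exact key (i, j) hij hc
    · rw [erase_union_distrib, erase_eq_of_notMem (key2 (i, j) hij), insert_union]
  · right
    refine ⟨i, j, k, l, mem_union_left _ hij, ?_, mem_union_left _ hkl,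
      mem_union_left _ hlk, hs, ?_⟩
    · intro hc
      rcases mem_union.1 hc with hc | hc
      · exact hji hc
      · exact key (i, j) hij hc
    · rw [erase_union_distrib, erase_eq_of_notMem (key2 (k, l) hkl), insert_union]

lemma rtg_props (h : ReflTransGen SimpleMove X Y) (hX : ∀ p ∈ X, p.1 ≠ p.2) :
    (∀ p ∈ Y, p.1 ≠ p.2) ∧ pr Y = pr X := by
  induction h with
  | refl => exact ⟨hX, rfl⟩
  | tail _ hstep ih => exact ⟨noloop_move hstep ih.1, (pr_move hstep ih.1).trans ih.2⟩

lemma lift_rtg (h : ReflTransGen SimpleMove X Y) (hX : ∀ p ∈ X, p.1 ≠ p.2)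
    (hA : ∀ q ∈ A, s(q.1, q.2) ∉ pr X) :
    ReflTransGen SimpleMove (X ∪ A) (Y ∪ A) := by
  induction h with
  | refl => exact .refl
  | tail hZW hstep ih =>
      have hp := rtg_props hZW hX
      exact ih.tail (lift_step hstep (fun q hq => by rw [hp.2]; exact hA q hq))

lemma mem_filter_pair {q : V × V} :
    q ∈ X.filter (fun r => s(r.1, r.2) ≠ s(a, b)) ↔ q ∈ X ∧ q ≠ (a, b) ∧ q ≠ (b, a) := by
  simp [mem_filter, pair_eq, not_or, and_assoc]

lemma decomp_single (h1 : (a, b) ∈ X) (h2 : (b, a) ∉ X) :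
    X = X.filter (fun r => s(r.1, r.2) ≠ s(a, b)) ∪ {(a, b)} := by
  ext q
  simp only [mem_union, mem_filter_pair, mem_singleton]
  constructor
  · intro hq
    by_cases hq1 : q = (a, b)
    · exact Or.inr hq1
    · exact Or.inl ⟨hq, hq1, fun hc => h2 (hc ▸ hq)⟩
  · rintro (⟨hq, -, -⟩ | rfl)
    · exact hq
    · exact h1

lemma decomp_single' (h1 : (b, a) ∈ X) (h2 : (a, b) ∉ X) :
    X = X.filter (fun r => s(r.1, r.2) ≠ s(a, b)) ∪ {(b, a)} := by
  ext q
  simp only [mem_union, mem_filter_pair, mem_singleton]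
  constructor
  · intro hq
    by_cases hq2 : q = (b, a)
    · exact Or.inr hq2
    · exact Or.inl ⟨hq, fun hc => h2 (hc ▸ hq), hq2⟩
  · rintro (⟨hq, -, -⟩ | rfl)
    · exact hq
    · exact h1

lemma decomp_double (h1 : (a, b) ∈ X) (h2 : (b, a) ∈ X) :
    X = X.filter (fun r => s(r.1, r.2) ≠ s(a, b)) ∪ {(a, b), (b, a)} := by
  ext q
  simp only [mem_union, mem_filter_pair, mem_insert, mem_singleton]
  constructor
  · intro hq
    by_cases hq1 : q = (a, b)
    · exact Or.inr (Or.inl hq1)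
    · by_cases hq2 : q = (b, a)
      · exact Or.inr (Or.inr hq2)
      · exact Or.inl ⟨hq, hq1, hq2⟩
  · rintro (⟨hq, -, -⟩ | rfl | rfl)
    · exact hq
    · exact h1
    · exact h2

lemma union_singleton {α : Type*} [DecidableEq α] (s : Finset α) (x : α) :
    s ∪ {x} = insert x s := by rw [union_comm, ← insert_eq]

lemma card_union_single {x : V × V} (h : x ∉ X) : (X ∪ {x}).card = X.card + 1 := by
  rw [union_singleton, card_insert_of_notMem h]

lemma card_union_pair (hab : a ≠ b) (h1 : (a, b) ∉ X) (h2 : (b, a) ∉ X) :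
    (X ∪ {(a, b), (b, a)}).card = X.card + 2 := by
  rw [union_insert, union_singleton,
    card_insert_of_notMem (by
      simp only [mem_insert, not_or]
      exact ⟨fun hc => hab (congrArg Prod.fst hc), h1⟩),
    card_insert_of_notMem h2]

lemma union_single_erase {x : V × V} (h : x ∉ X) : (X ∪ {x}).erase x = X := by
  rw [union_singleton, erase_insert h]


lemma aux (n : ℕ) : ∀ (E E' : Finset (V × V)), (∀ p ∈ E, p.1 ≠ p.2) → (∀ p ∈ E', p.1 ≠ p.2) →
    pr E = pr E' → E.card = E'.card → (pr E).card = n →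
    Relation.ReflTransGen SimpleMove E E' := by
  induction n with
  | zero =>
      intro E E' _ _ hpr _ hn
      have h1 : E = ∅ := by
        have := card_eq_zero.1 hn
        simpa [pr] using this
      have h2 : E' = ∅ := by
        have : (pr E').card = 0 := by rw [← hpr, hn]
        have := card_eq_zero.1 this
        simpa [pr] using this
      rw [h1, h2]
  | succ n ih =>
      intro E E' hE hE' hpr hcard hn
      have hEne : E.Nonempty := by
        rcases E.eq_empty_or_nonempty with rfl | h
        · simp [pr] at hn
        · exact h
      obtain ⟨⟨a, b⟩, habE⟩ := hEne
      have hab' : a ≠ b := hE _ habE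
      have hne_pair : ((a, b) : V × V) ≠ (b, a) := fun hc => hab' (congrArg Prod.fst hc)
      have heE : s(a, b) ∈ pr E := mem_pr.2 ⟨(a, b), habE, rfl⟩
      have hsba : s(b, a) = s(a, b) := Sym2.eq_swap
      -- facts about the filtered sets
      have hmemF : ∀ q : V × V, q ∈ E.filter (fun r => s(r.1, r.2) ≠ s(a, b)) ↔
          q ∈ E ∧ q ≠ (a, b) ∧ q ≠ (b, a) := fun q => mem_filter_pair
      have hmemF' : ∀ q : V × V, q ∈ E'.filter (fun r => s(r.1, r.2) ≠ s(a, b)) ↔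
          q ∈ E' ∧ q ≠ (a, b) ∧ q ≠ (b, a) := fun q => mem_filter_pair
      have hmemF2 : ∀ q : V × V, q ∈ E → s(q.1, q.2) ≠ s(a, b) →
          q ∈ E.filter (fun r => s(r.1, r.2) ≠ s(a, b)) := fun q hq hs =>
        (hmemF q).2 ⟨hq, (ne_pair_of_ne_sym hs).1, (ne_pair_of_ne_sym hs).2⟩
      have prF : pr (E.filter (fun r => s(r.1, r.2) ≠ s(a, b))) = (pr E).erase s(a, b) :=
        pr_filter_ne _
      have prF' : pr (E'.filter (fun r => s(r.1, r.2) ≠ s(a, b))) = (pr E).erase s(a, b) := by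
        rw [pr_filter_ne, hpr]
      have hFnl : ∀ p ∈ E.filter (fun r => s(r.1, r.2) ≠ s(a, b)), p.1 ≠ p.2 :=
        fun p hp => hE p (mem_of_mem_filter p hp)
      have hF'nl : ∀ p ∈ E'.filter (fun r => s(r.1, r.2) ≠ s(a, b)), p.1 ≠ p.2 :=
        fun p hp => hE' p (mem_of_mem_filter p hp)
      have habF : (a, b) ∉ E.filter (fun r => s(r.1, r.2) ≠ s(a, b)) := fun hc =>
        ((hmemF _).1 hc).2.1 rfl
      have hbaF : (b, a) ∉ E.filter (fun r => s(r.1, r.2) ≠ s(a, b)) := fun hc =>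
        ((hmemF _).1 hc).2.2 rfl
      have habF' : (a, b) ∉ E'.filter (fun r => s(r.1, r.2) ≠ s(a, b)) := fun hc =>
        ((hmemF' _).1 hc).2.1 rfl
      have hbaF' : (b, a) ∉ E'.filter (fun r => s(r.1, r.2) ≠ s(a, b)) := fun hc =>
        ((hmemF' _).1 hc).2.2 rfl
      have hcardn : ((pr E).erase s(a, b)).card = n := by
        rw [card_erase_of_mem heE, hn]; omega
      set F := E.filter (fun r => s(r.1, r.2) ≠ s(a, b)) with hF
      set F' := E'.filter (fun r => s(r.1, r.2) ≠ s(a, b)) with hF'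
      have hprFF' : pr F = pr F' := prF.trans prF'.symm
      -- A-hypotheses for lifting
      have hA2 : ∀ W : Finset (V × V), pr W = (pr E).erase s(a, b) →
          ∀ q ∈ ({(a, b), (b, a)} : Finset (V × V)), s(q.1, q.2) ∉ pr W := by
        intro W hW q hq
        rw [hW]
        rcases mem_insert.1 hq with rfl | hq
        · exact notMem_erase _ _
        · rw [mem_singleton] at hq
          subst hq
          show s(b, a) ∉ (pr E).erase s(a, b)
          rw [hsba]
          exact notMem_erase _ _
      have hA1 : ∀ W : Finset (V × V), pr W = (pr E).erase s(a, b) →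
          ∀ q ∈ ({(a, b)} : Finset (V × V)), s(q.1, q.2) ∉ pr W := by
        intro W hW q hq
        rw [mem_singleton] at hq
        subst hq
        rw [hW]
        exact notMem_erase _ _
      have hA1' : ∀ W : Finset (V × V), pr W = (pr E).erase s(a, b) →
          ∀ q ∈ ({(b, a)} : Finset (V × V)), s(q.1, q.2) ∉ pr W := by
        intro W hW q hq
        rw [mem_singleton] at hq
        subst hq
        rw [hW]
        show s(b, a) ∉ (pr E).erase s(a, b)
        rw [hsba]
        exact notMem_erase _ _
      have h'ab : (a, b) ∈ E' ∨ (b, a) ∈ E' := by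
        have h1 : s(a, b) ∈ pr E' := by rw [← hpr]; exact heE
        obtain ⟨p, hp, hs⟩ := mem_pr.1 h1
        rcases pair_eq.1 hs with rfl | rfl
        · exact Or.inl hp
        · exact Or.inr hp
      by_cases hba : (b, a) ∈ E
      · have hdE : E = F ∪ {(a, b), (b, a)} := decomp_double habE hba
        have hc1 : E.card = F.card + 2 := by
          conv_lhs => rw [hdE]
          exact card_union_pair hab' habF hbaF
        by_cases hd' : (a, b) ∈ E' ∧ (b, a) ∈ E'
        · -- both double
          have hdE' : E' = F' ∪ {(a, b), (b, a)} := decomp_double hd'.1 hd'.2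
          have hc1' : E'.card = F'.card + 2 := by
            conv_lhs => rw [hdE']
            exact card_union_pair hab' habF' hbaF'
          have hrec := ih F F' hFnl hF'nl hprFF' (by omega) (by rw [prF]; exact hcardn)
          rw [hdE, hdE']
          exact lift_rtg hrec hFnl (hA2 _ prF)
        · -- E double, E' single
          have hex : ∃ q ∈ F, (q.2, q.1) ∉ F := by
            by_contra hcon
            push_neg at hcon
            have hsub : F' ⊆ F := by
              intro q hq
              have hq1 : s(q.1, q.2) ∈ pr F := by
                rw [prF, ← prF']
                exact mem_pr.2 ⟨q, hq, rfl⟩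
              obtain ⟨r, hr, hrs⟩ := mem_pr.1 hq1
              rcases pair_eq.1 hrs with hr2 | hr2
              · rwa [hr2, Prod.mk.eta] at hr
              · have hswap := hcon r hr
                rw [hr2] at hswap
                simpa using hswap
            have hle := card_le_card hsub
            have hc1' : E'.card = F'.card + 1 := by
              rcases (by tauto : ((a, b) ∈ E' ∧ (b, a) ∉ E') ∨ ((b, a) ∈ E' ∧ (a, b) ∉ E'))
                with ⟨h1, h2⟩ | ⟨h2, h1⟩
              · conv_lhs => rw [decomp_single h1 h2]
                exact card_union_single habF'
              · conv_lhs => rw [decomp_single' h2 h1]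
                exact card_union_single hbaF'
            omega
          obtain ⟨⟨i, j⟩, hijF, hjiF⟩ := hex
          have hijE : (i, j) ∈ E := mem_of_mem_filter _ hijF
          have hsij : s(i, j) ≠ s(a, b) := by
            have h := (hmemF _).1 hijF
            intro hc
            rcases (pair_eq (q := (i, j))).1 hc with h3 | h3
            · exact h.2.1 h3
            · exact h.2.2 h3
          have hsji : s(j, i) ≠ s(a, b) := by
            rw [show s(j, i) = s(i, j) from Sym2.eq_swap]
            exact hsij
          have hjiE : (j, i) ∉ E := fun hc => hjiF (hmemF2 (j, i) hc hsji)
          have hEab : E.erase (a, b) = F ∪ {(b, a)} := by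
            ext q
            rw [mem_erase, mem_union, hF, mem_filter_pair, mem_singleton]
            constructor
            · rintro ⟨hq1, hq2⟩
              by_cases hqb : q = (b, a)
              · exact Or.inr hqb
              · exact Or.inl ⟨hq2, hq1, hqb⟩
            · rintro (⟨hq, hq1, -⟩ | rfl)
              · exact ⟨hq1, hq⟩
              · exact ⟨hne_pair.symm, hba⟩
          have move1 : SimpleMove E ((insert (j, i) F) ∪ {(b, a)}) :=
            Or.inr ⟨i, j, a, b, hijE, hjiE, habE, hba, hsij, by rw [hEab, insert_union]⟩
          have hInl : ∀ p ∈ insert (j, i) F, p.1 ≠ p.2 := by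
            intro p hp
            rcases mem_insert.1 hp with rfl | hp
            · exact (hE _ hijE).symm
            · exact hFnl p hp
          have prIns : pr (insert (j, i) F) = (pr E).erase s(a, b) := by
            rw [pr_insert, ← prF]
            exact insert_eq_self.2 (mem_pr.2 ⟨(i, j), hijF, Sym2.eq_swap⟩)
          have hcIns : (insert (j, i) F).card = F.card + 1 := card_insert_of_notMem hjiF
          rcases (by tauto : ((a, b) ∈ E' ∧ (b, a) ∉ E') ∨ ((b, a) ∈ E' ∧ (a, b) ∉ E'))
            with ⟨h1, h2⟩ | ⟨h2, h1⟩
          · -- E' single (a, b) : need an extra flip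
            have hdE' : E' = F' ∪ {(a, b)} := decomp_single h1 h2
            have hc1' : E'.card = F'.card + 1 := by
              conv_lhs => rw [hdE']
              exact card_union_single habF'
            have hrec := ih (insert (j, i) F) F' hInl hF'nl (prIns.trans prF'.symm) (by omega)
              (by rw [prIns]; exact hcardn)
            have hbaIns : (b, a) ∉ insert (j, i) F := by
              intro hc
              rcases mem_insert.1 hc with hc | hc
              · exact hsji (by simp only [Prod.mk.injEq] at hc; rw [← hc.1, ← hc.2]; exact hsba)
              · exact hbaF hc
            have move2 : SimpleMove ((insert (j, i) F) ∪ {(b, a)})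
                ((insert (j, i) F) ∪ {(a, b)}) := by
              left
              refine ⟨b, a, mem_union_right _ (mem_singleton.2 rfl), ?_, ?_⟩
              · intro hc
                rcases mem_union.1 hc with hc | hc
                · rcases mem_insert.1 hc with hc | hc
                  · exact hsji (by simp only [Prod.mk.injEq] at hc; rw [← hc.1, ← hc.2])
                  · exact habF hc
                · exact hne_pair (mem_singleton.1 hc)
              · rw [union_single_erase hbaIns, union_singleton]
            rw [hdE']
            exact .head move1 (.head move2 (lift_rtg hrec hInl (hA1 _ prIns)))
          · -- E' single (b, a)
            have hdE' : E' = F' ∪ {(b, a)} := decomp_single' h2 h1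
            have hc1' : E'.card = F'.card + 1 := by
              conv_lhs => rw [hdE']
              exact card_union_single hbaF'
            have hrec := ih (insert (j, i) F) F' hInl hF'nl (prIns.trans prF'.symm) (by omega)
              (by rw [prIns]; exact hcardn)
            rw [hdE']
            exact .head move1 (lift_rtg hrec hInl (hA1' _ prIns))
      · have hdE : E = F ∪ {(a, b)} := decomp_single habE hba
        have hc1 : E.card = F.card + 1 := by
          conv_lhs => rw [hdE]
          exact card_union_single habF
        by_cases h1 : (a, b) ∈ E'
        · by_cases h2 : (b, a) ∈ E'
          · -- E single, E' double
            have hdE' : E' = F' ∪ {(a, b), (b, a)} := decomp_double h1 h2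
            have hc1' : E'.card = F'.card + 2 := by
              conv_lhs => rw [hdE']
              exact card_union_pair hab' habF' hbaF'
            have hex : ∃ q ∈ F, (q.2, q.1) ∈ F := by
              by_contra hcon
              push_neg at hcon
              have hinj : Set.InjOn (fun p : V × V => s(p.1, p.2)) F := by
                intro p hp q hq hs
                rcases pair_eq.1 hs with h3 | h3
                · rwa [Prod.mk.eta] at h3
                · exact absurd (mem_coe.1 (h3 ▸ hp)) (hcon q (mem_coe.1 hq))
              have hc2 : (pr F).card = F.card := card_image_of_injOn hinj
              have hc3 : (pr F').card ≤ F'.card := card_image_le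
              rw [hprFF'] at hc2
              omega
            obtain ⟨⟨k, l⟩, hklF, hlkF⟩ := hex
            have hklE : (k, l) ∈ E := mem_of_mem_filter _ hklF
            have hlkE : (l, k) ∈ E := mem_of_mem_filter _ hlkF
            have hkl' : k ≠ l := hE _ hklE
            have hskl : s(k, l) ≠ s(a, b) := by
              have h := (hmemF _).1 hklF
              intro hc
              rcases (pair_eq (q := (k, l))).1 hc with h3 | h3
              · exact h.2.1 h3
              · exact h.2.2 h3
            have habkl : ((a, b) : V × V) ≠ (k, l) := fun hc => hskl (by simp only [Prod.mk.injEq] at hc; rw [← hc.1, ← hc.2])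
            have hEer : E.erase (k, l) = (F.erase (k, l)) ∪ {(a, b)} := by
              ext q
              rw [mem_erase, mem_union, mem_erase, hF, mem_filter_pair, mem_singleton]
              constructor
              · rintro ⟨hq1, hq2⟩
                by_cases hqa : q = (a, b)
                · exact Or.inr hqa
                · exact Or.inl ⟨hq1, hq2, hqa, fun hc => hba (hc ▸ hq2)⟩
              · rintro (⟨hq1, hq2, -, -⟩ | rfl)
                · exact ⟨hq1, hq2⟩
                · exact ⟨habkl, habE⟩
            have move1 : SimpleMove E ((F.erase (k, l)) ∪ {(a, b), (b, a)}) := by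
              right
              refine ⟨a, b, k, l, habE, hba, hklE, hlkE, fun hc => hskl hc.symm, ?_⟩
              rw [hEer]
              ext q
              simp only [mem_union, mem_insert, mem_singleton, mem_erase]
              tauto
            have hernl : ∀ p ∈ F.erase (k, l), p.1 ≠ p.2 :=
              fun p hp => hFnl p (erase_subset _ _ hp)
            have prEr : pr (F.erase (k, l)) = (pr E).erase s(a, b) := by
              rw [pr_erase_swap hlkF hkl', prF]
            have hpos : 0 < F.card := card_pos.2 ⟨_, hklF⟩
            have hcEr : (F.erase (k, l)).card + 1 = F.card := by
              rw [card_erase_of_mem hklF]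
              omega
            have hrec := ih (F.erase (k, l)) F' hernl hF'nl (prEr.trans prF'.symm) (by omega)
              (by rw [prEr]; exact hcardn)
            rw [hdE']
            exact .head move1 (lift_rtg hrec hernl (hA2 _ prEr))
          · -- both single, same orientation
            have hdE' : E' = F' ∪ {(a, b)} := decomp_single h1 h2
            have hc1' : E'.card = F'.card + 1 := by
              conv_lhs => rw [hdE']
              exact card_union_single habF'
            have hrec := ih F F' hFnl hF'nl hprFF' (by omega) (by rw [prF]; exact hcardn)
            rw [hdE, hdE']
            exact lift_rtg hrec hFnl (hA1 _ prF)
        · -- both single, opposite orientation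
          have h2 : (b, a) ∈ E' := h'ab.resolve_left h1
          have hdE' : E' = F' ∪ {(b, a)} := decomp_single' h2 h1
          have hc1' : E'.card = F'.card + 1 := by
            conv_lhs => rw [hdE']
            exact card_union_single hbaF'
          have hErase : E.erase (a, b) = F := by
            ext q
            rw [mem_erase, hF, mem_filter_pair]
            constructor
            · rintro ⟨hq1, hq2⟩
              exact ⟨hq2, hq1, fun hc => hba (hc ▸ hq2)⟩
            · rintro ⟨hq, hq1, -⟩
              exact ⟨hq1, hq⟩
          have move1 : SimpleMove E (F ∪ {(b, a)}) :=
            Or.inl ⟨a, b, habE, hba, by rw [hErase, union_singleton]⟩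
          have hrec := ih F F' hFnl hF'nl hprFF' (by omega) (by rw [prF]; exact hcardn)
          rw [hdE']
          exact .head move1 (lift_rtg hrec hFnl (hA1' _ prF))

end SimpleMoveAux

/-- irreducibility: any two simple directed graphs with the same underlying
undirected graph and the same number of directed edges are connected by a finite sequence of
single edge flips and double edge moves. -/
theorem simple_moves_connect (E E' : Finset (V × V))
    (hE : ∀ p ∈ E, p.1 ≠ p.2) (hE' : ∀ p ∈ E', p.1 ≠ p.2)
    (hpr : E.image (fun p => s(p.1, p.2)) = E'.image (fun p => s(p.1, p.2)))
    (hcard : E.card = E'.card) :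
    Relation.ReflTransGen SimpleMove E E' :=
  SimpleMoveAux.aux (SimpleMoveAux.pr E).card E E' hE hE' hpr hcard rfl
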